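/- For all integers m, n ≥ 1 and every t ∈ ℕ, A_{m+n}(t) = ∑_{s=0}^t A_m(s)·A_n(t−s); in particular, since A_1 = p, for n ≥ 2 one has A_n(t) = ∑_{x=0}^t p(x)·A_{n−1}(t−x). -/

import Mathlib

open scoped BigOperators

/-- `p x = ∑_{k=1}^r a_{k-1} (k-1)! C(x+k-1, x)` (index shifted: `k ∈ range r` stands for `k-1`). -/
noncomputable def p (r : ℕ) (a : ℕ → ℝ) (x : ℕ) : ℝ :=
  ∑ k ∈ Finset.range r, a k * (Nat.factorial k : ℝ) * (Nat.choose (x + k) x : ℝ)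

/-- `h θ = 1 / ∑_{k=1}^r a_{k-1} (k-1)! / θ^k` (index shifted). -/
noncomputable def h (r : ℕ) (a : ℕ → ℝ) (θ : ℝ) : ℝ :=
  1 / ∑ k ∈ Finset.range r, a k * (Nat.factorial k : ℝ) / θ ^ (k + 1)

/-- `A n t = ∑_{y₁+⋯+y_r = n} (n!/(y₁!⋯y_r!)) (∏_{k=1}^r (a_{k-1}(k-1)!)^{y_k})
    C(t + ∑_{k=1}^r k y_k − 1, t)`. -/
noncomputable def A (r : ℕ) (a : ℕ → ℝ) (n t : ℕ) : ℝ :=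
  ∑ y ∈ Finset.Nat.antidiagonalTuple r n,
    ((Nat.factorial n : ℝ) / ∏ k : Fin r, (Nat.factorial (y k) : ℝ)) *
      (∏ k : Fin r, (a (k : ℕ) * (Nat.factorial (k : ℕ) : ℝ)) ^ (y k)) *
      (Nat.choose (t + (∑ k : Fin r, ((k : ℕ) + 1) * y k) - 1) t : ℝ)

section AuxAC
open Finset Finset.Nat

lemma triangle_reindex {M : Type*} [AddCommMonoid M] (t : ℕ) (g : ℕ → ℕ → M) :
    ∑ s ∈ range (t+1), ∑ j ∈ range (t - s + 1), g s j
      = ∑ u ∈ range (t+1), ∑ s ∈ range (u+1), g s (u - s) := by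
  rw [Finset.sum_sigma' (range (t+1)) (fun s => range (t - s + 1)) (fun s j => g s j),
      Finset.sum_sigma' (range (t+1)) (fun u => range (u+1)) (fun u s => g s (u - s))]
  refine Finset.sum_nbij' (i := fun q => ⟨q.1 + q.2, q.1⟩) (j := fun q => ⟨q.2, q.1 - q.2⟩)
    ?_ ?_ ?_ ?_ ?_
  · rintro ⟨a, b⟩ hq
    simp only [Finset.mem_sigma, Finset.mem_range] at *
    omega
  · rintro ⟨a, b⟩ hq
    simp only [Finset.mem_sigma, Finset.mem_range] at *
    omega
  · rintro ⟨a, b⟩ hq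
    simp only [Finset.mem_sigma, Finset.mem_range] at hq
    have h1 : a + b - a = b := by omega
    simp only [h1]
  · rintro ⟨a, b⟩ hq
    simp only [Finset.mem_sigma, Finset.mem_range] at hq
    have h1 : b + (a - b) = a := by omega
    simp only [h1]
  · rintro ⟨a, b⟩ hq
    simp only [Finset.mem_sigma, Finset.mem_range] at hq
    have h1 : a + b - a = b := by omega
    simp only [h1]

lemma add_choose_symm (a b : ℕ) : (a + b).choose a = (a + b).choose b := by
  rw [← Nat.choose_symm (Nat.le_add_right a b), Nat.add_sub_cancel_left]

lemma choose_conv (P q t : ℕ) :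
    ∑ s ∈ range (t+1), Nat.choose (s + P) s * Nat.choose (t - s + q) (t - s)
      = Nat.choose (t + P + q + 1) t := by
  induction q generalizing t with
  | zero =>
    simp only [Nat.choose_self, mul_one, Nat.add_zero]
    have h1 : ∀ s ∈ range (t+1), (s + P).choose s = (s + P).choose P := by
      intro s _; exact add_choose_symm s P
    rw [Finset.sum_congr rfl h1]
    have h2 : ∑ s ∈ range (t+1), (s + P).choose P = ∑ i ∈ Icc P (t + P), i.choose P := by
      refine Finset.sum_nbij' (i := fun s => s + P) (j := fun i => i - P) ?_ ?_ ?_ ?_ ?_ <;>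
        intro x hx <;> simp only [Finset.mem_range, Finset.mem_Icc] at * <;> omega
    rw [h2, Nat.sum_Icc_choose]
    have : t + P + 1 = t + (P + 1) := by omega
    rw [this, add_choose_symm t (P+1)]
  | succ q ih =>
    have hpas : ∀ s ∈ range (t+1), Nat.choose (s + P) s * Nat.choose (t - s + (q+1)) (t - s)
        = ∑ j ∈ range (t - s + 1), Nat.choose (s + P) s * Nat.choose (j + q) j := by
      intro s hs
      simp only [Finset.mem_range] at hs
      rw [← Finset.mul_sum]
      congr 1
      -- C(t-s+q+1, t-s) = ∑_{j ≤ t-s} C(j+q, j)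
      have h3 : ∀ j ∈ range (t - s + 1), Nat.choose (j + q) j = Nat.choose (j + q) q := by
        intro j _; exact add_choose_symm j q
      rw [Finset.sum_congr rfl h3]
      have h2 : ∑ j ∈ range (t - s + 1), (j + q).choose q = ∑ i ∈ Icc q (t - s + q), i.choose q := by
        refine Finset.sum_nbij' (i := fun s => s + q) (j := fun i => i - q) ?_ ?_ ?_ ?_ ?_ <;>
          intro x hx <;> simp only [Finset.mem_range, Finset.mem_Icc] at * <;> omega
      rw [h2, Nat.sum_Icc_choose]
      have h4 : t - s + q + 1 = (t - s) + (q + 1) := by omega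
      rw [h4, add_choose_symm (t-s) (q+1)]
    rw [Finset.sum_congr rfl hpas,
        triangle_reindex t (fun s j => Nat.choose (s + P) s * Nat.choose (j + q) j)]
    have h5 : ∀ u ∈ range (t+1),
        ∑ s ∈ range (u+1), Nat.choose (s + P) s * Nat.choose (u - s + q) (u - s)
          = Nat.choose (u + (P + q + 1)) (P + q + 1) := by
      intro u _
      rw [ih u]
      have : u + P + q + 1 = u + (P + q + 1) := by omega
      rw [this, add_choose_symm u (P+q+1)]
    rw [Finset.sum_congr rfl h5]
    have h2 : ∑ u ∈ range (t + 1), (u + (P+q+1)).choose (P+q+1)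
        = ∑ i ∈ Icc (P+q+1) (t + (P+q+1)), i.choose (P+q+1) := by
      refine Finset.sum_nbij' (i := fun s => s + (P+q+1)) (j := fun i => i - (P+q+1))
        ?_ ?_ ?_ ?_ ?_ <;>
        intro x hx <;> simp only [Finset.mem_range, Finset.mem_Icc] at * <;> omega
    rw [h2, Nat.sum_Icc_choose]
    have h6 : t + (P+q+1) + 1 = t + (P + q + 2) := by omega
    rw [h6]
    have h7 : P + q + 1 + 1 = P + q + 2 := by omega
    rw [h7, ← add_choose_symm t (P+q+2)]
    congr 1
    omega


lemma sum_antidiagonalTuple_succ {M : Type*} [AddCommMonoid M] (k n : ℕ)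
    (f : (Fin (k+1) → ℕ) → M) :
    ∑ y ∈ antidiagonalTuple (k+1) n, f y
      = ∑ pr ∈ (Finset.HasAntidiagonal.antidiagonal n : Finset (ℕ × ℕ)), ∑ x ∈ antidiagonalTuple k pr.2, f (Fin.cons pr.1 x) := by
  rw [Finset.sum_sigma' ((Finset.HasAntidiagonal.antidiagonal n : Finset (ℕ × ℕ))) (fun pr => antidiagonalTuple k pr.2)
    (fun pr x => f (Fin.cons pr.1 x))]
  refine (Finset.sum_nbij' (i := fun (q : Σ _ : ℕ × ℕ, (Fin k → ℕ)) => Fin.cons q.1.1 q.2)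
    (j := fun y => ⟨(y 0, ∑ i : Fin k, y i.succ), Fin.tail y⟩) ?_ ?_ ?_ ?_ ?_).symm
  · rintro ⟨⟨i, j⟩, x⟩ hq
    simp only [Finset.mem_sigma, Finset.HasAntidiagonal.mem_antidiagonal, mem_antidiagonalTuple] at *
    rw [Fin.sum_cons]
    omega
  · intro y hy
    simp only [Finset.mem_sigma, Finset.HasAntidiagonal.mem_antidiagonal, mem_antidiagonalTuple,
      Fin.sum_univ_succ] at *
    exact ⟨hy, rfl⟩
  · rintro ⟨⟨i, j⟩, x⟩ hq
    simp only [Finset.mem_sigma, Finset.HasAntidiagonal.mem_antidiagonal, mem_antidiagonalTuple] at hq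
    have h2 : ∑ t : Fin k, (Fin.cons i x : Fin (k+1) → ℕ) t.succ = j := by
      simp only [Fin.cons_succ]; exact hq.2
    simp only [Fin.cons_zero, Fin.tail_cons, h2]
  · intro y hy
    exact Fin.cons_self_tail y
  · rintro ⟨⟨i, j⟩, x⟩ hq
    rfl

lemma vandermonde_tuple : ∀ (r : ℕ) (y : Fin r → ℕ) (m : ℕ),
    ∑ u ∈ antidiagonalTuple r m, ∏ k, Nat.choose (y k) (u k) = Nat.choose (∑ k, y k) m
  | 0, y, m => by
    cases m with
    | zero => simp
    | succ m => simp
  | (r+1), y, m => by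
    rw [sum_antidiagonalTuple_succ]
    have h1 : ∀ pr ∈ (Finset.HasAntidiagonal.antidiagonal m : Finset (ℕ × ℕ)),
        ∑ x ∈ antidiagonalTuple r pr.2, ∏ k, Nat.choose (y k) ((Fin.cons pr.1 x : Fin (r+1) → ℕ) k)
          = Nat.choose (y 0) pr.1 * Nat.choose (∑ k : Fin r, y k.succ) pr.2 := by
      intro pr _
      have h2 : ∀ x : Fin r → ℕ,
          ∏ k, Nat.choose (y k) ((Fin.cons pr.1 x : Fin (r+1) → ℕ) k)
            = Nat.choose (y 0) pr.1 * ∏ k : Fin r, Nat.choose (y k.succ) (x k) := by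
        intro x
        rw [Fin.prod_univ_succ]
        simp [Fin.cons_succ, Fin.cons_zero]
      rw [Finset.sum_congr rfl (fun x _ => h2 x), ← Finset.mul_sum,
        vandermonde_tuple r (fun k => y k.succ) pr.2]
    rw [Finset.sum_congr rfl h1, ← Nat.add_choose_eq, ← Fin.sum_univ_succ]

lemma choose_conv' (Su Sv t : ℕ) (hu : 1 ≤ Su) (hv : 1 ≤ Sv) :
    ∑ s ∈ range (t+1),
        ((Nat.choose (s + Su - 1) s : ℝ) * (Nat.choose (t - s + Sv - 1) (t - s) : ℝ))
      = (Nat.choose (t + Su + Sv - 1) t : ℝ) := by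
  obtain ⟨P, rfl⟩ := Nat.exists_eq_add_of_le hu
  obtain ⟨q, rfl⟩ := Nat.exists_eq_add_of_le hv
  have e1 : ∀ s : ℕ, s + (1 + P) - 1 = s + P := fun s => by omega
  have e2 : ∀ s : ℕ, t - s + (1 + q) - 1 = t - s + q := fun s => by omega
  have e3 : t + (1 + P) + (1 + q) - 1 = t + P + q + 1 := by omega
  simp only [e1, e2, e3]
  exact_mod_cast congrArg (Nat.cast (R := ℝ)) (choose_conv P q t)

lemma fiber_choose (r m n : ℕ) (y : Fin r → ℕ) (hy : ∑ k, y k = m + n) :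
    ∑ pr ∈ (antidiagonalTuple r m ×ˢ antidiagonalTuple r n).filter
        (fun pr => pr.1 + pr.2 = y),
      ∏ k, Nat.choose (y k) (pr.1 k) = Nat.choose (m + n) m := by
  have step1 : ∑ pr ∈ (antidiagonalTuple r m ×ˢ antidiagonalTuple r n).filter
        (fun pr => pr.1 + pr.2 = y), ∏ k, Nat.choose (y k) (pr.1 k)
      = ∑ u ∈ (antidiagonalTuple r m).filter (fun u => ∀ k, u k ≤ y k),
          ∏ k, Nat.choose (y k) (u k) := by
    refine Finset.sum_nbij' (i := fun pr => pr.1) (j := fun u => (u, y - u)) ?_ ?_ ?_ ?_ ?_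
    · rintro ⟨u, v⟩ h
      rw [Finset.mem_filter, Finset.mem_product] at h
      rw [Finset.mem_filter]
      refine ⟨h.1.1, fun k => ?_⟩
      show u k ≤ y k
      have := congrFun h.2 k
      simp only [Pi.add_apply] at this
      omega
    · intro u hu
      rw [Finset.mem_filter] at hu
      obtain ⟨hu1, hu2⟩ := hu
      have hu1' := hu1
      rw [mem_antidiagonalTuple] at hu1'
      have hyu : u + (y - u) = y := by
        funext k
        simp only [Pi.add_apply, Pi.sub_apply]
        exact Nat.add_sub_cancel' (hu2 k)
      rw [Finset.mem_filter, Finset.mem_product]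
      refine ⟨⟨hu1, ?_⟩, hyu⟩
      rw [mem_antidiagonalTuple]
      have hsub : ∑ k : Fin r, (y - u) k = (∑ k : Fin r, y k) - ∑ k : Fin r, u k := by
        simp only [Pi.sub_apply]
        exact Finset.sum_tsub_distrib Finset.univ (fun k _ => hu2 k)
      rw [hsub, hy, hu1']
      omega
    · rintro ⟨u, v⟩ h
      rw [Finset.mem_filter, Finset.mem_product] at h
      have : y - u = v := by
        funext k
        have := congrFun h.2 k
        simp only [Pi.add_apply] at this
        simp only [Pi.sub_apply]
        omega
      simp [this]
    · intro u hu
      rfl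
    · rintro ⟨u, v⟩ h
      rfl
  rw [step1]
  have step2 : ∑ u ∈ (antidiagonalTuple r m).filter (fun u => ∀ k, u k ≤ y k),
        ∏ k, (y k).choose (u k)
      = ∑ u ∈ antidiagonalTuple r m, ∏ k, (y k).choose (u k) := by
    apply Finset.sum_subset (Finset.filter_subset _ _)
    intro u hu hnu
    simp only [Finset.mem_filter, not_and, not_forall, not_le] at hnu
    obtain ⟨k0, hk0⟩ := hnu hu
    exact Finset.prod_eq_zero (Finset.mem_univ k0) (Nat.choose_eq_zero_of_lt hk0)
  rw [step2]
  rw [vandermonde_tuple r y m, hy]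


lemma A_one (r : ℕ) (a : ℕ → ℝ) (x : ℕ) : A r a 1 x = p r a x := by
  rw [A, p, Finset.sum_range (fun k => a k * (Nat.factorial k : ℝ) * (Nat.choose (x + k) x : ℝ))]
  refine (Finset.sum_bij (i := fun (k : Fin r) _ => (Pi.single k 1 : Fin r → ℕ))
    ?_ ?_ ?_ ?_).symm
  · intro k _
    rw [mem_antidiagonalTuple]
    simp [Finset.sum_pi_single']
  · intro k _ k' _ h
    by_contra hne
    have := congrFun h k
    simp [Pi.single_apply, hne] at this
  · intro y hy
    rw [mem_antidiagonalTuple] at hy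
    have h1 : ∃ k : Fin r, 0 < y k := by
      by_contra hc
      push_neg at hc
      have : ∑ k : Fin r, y k = 0 := Finset.sum_eq_zero (fun k _ => Nat.le_zero.1 (hc k))
      omega
    obtain ⟨k, hk⟩ := h1
    refine ⟨k, Finset.mem_univ k, ?_⟩
    have hle : y k ≤ 1 := hy ▸ Finset.single_le_sum (f := y) (fun i _ => Nat.zero_le _)
      (Finset.mem_univ k)
    have hyk : y k = 1 := by omega
    have hrest : ∀ j : Fin r, j ≠ k → y j = 0 := by
      intro j hj
      by_contra hc
      have h2 : 2 ≤ ∑ i : Fin r, y i := by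
        have := Finset.add_sum_erase Finset.univ y (Finset.mem_univ k)
        have hjmem : j ∈ Finset.univ.erase k := Finset.mem_erase.2 ⟨hj, Finset.mem_univ j⟩
        have := Finset.single_le_sum (f := y) (fun i _ => Nat.zero_le _) hjmem
        omega
      omega
    funext j
    by_cases hjk : j = k
    · subst hjk; simp [hyk]
    · simp [Pi.single_apply, hjk, hrest j hjk]
  · intro k _
    have hfac : (∏ j : Fin r, (Nat.factorial ((Pi.single k 1 : Fin r → ℕ) j) : ℝ)) = 1 := by
      apply Finset.prod_eq_one
      intro j _
      rcases eq_or_ne j k with h | h <;> simp [Pi.single_apply, h]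
    have hpow : (∏ j : Fin r, (a (j : ℕ) * (Nat.factorial (j : ℕ) : ℝ))
          ^ ((Pi.single k 1 : Fin r → ℕ) j)) = a (k : ℕ) * (Nat.factorial (k : ℕ) : ℝ) := by
      rw [Finset.prod_eq_single k]
      · simp
      · intro j _ hj; simp [Pi.single_apply, hj]
      · intro h; exact absurd (Finset.mem_univ k) h
    have hsum : (∑ j : Fin r, ((j : ℕ) + 1) * (Pi.single k 1 : Fin r → ℕ) j) = (k : ℕ) + 1 := by
      rw [Finset.sum_eq_single k]
      · simp
      · intro j _ hj; simp [Pi.single_apply, hj]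
      · intro h; exact absurd (Finset.mem_univ k) h
    rw [hfac, hpow, hsum]
    have : x + ((k : ℕ) + 1) - 1 = x + (k : ℕ) := by omega
    rw [this]
    simp [Nat.factorial]

noncomputable def Tf (r : ℕ) (y : Fin r → ℕ) : ℝ := ∏ k : Fin r, (Nat.factorial (y k) : ℝ)
noncomputable def Wp (r : ℕ) (a : ℕ → ℝ) (y : Fin r → ℕ) : ℝ :=
  ∏ k : Fin r, (a (k : ℕ) * (Nat.factorial (k : ℕ) : ℝ)) ^ (y k)
def Sw (r : ℕ) (y : Fin r → ℕ) : ℕ := ∑ k : Fin r, ((k : ℕ) + 1) * y k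

lemma A_eq (r : ℕ) (a : ℕ → ℝ) (n t : ℕ) :
    A r a n t = ∑ y ∈ antidiagonalTuple r n,
      ((Nat.factorial n : ℝ) / Tf r y) * Wp r a y
        * (Nat.choose (t + Sw r y - 1) t : ℝ) := rfl

lemma Sw_ge (r N : ℕ) (y : Fin r → ℕ) (hy : y ∈ antidiagonalTuple r N) : N ≤ Sw r y := by
  rw [mem_antidiagonalTuple] at hy
  calc N = ∑ k : Fin r, y k := hy.symm
    _ ≤ _ := Finset.sum_le_sum fun k _ => Nat.le_mul_of_pos_left (y k) (Nat.succ_pos _)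

lemma Sw_add (r : ℕ) (u v : Fin r → ℕ) : Sw r (u + v) = Sw r u + Sw r v := by
  rw [Sw, Sw, Sw, ← Finset.sum_add_distrib]
  exact Finset.sum_congr rfl fun k _ => by simp only [Pi.add_apply]; ring

lemma Wp_add (r : ℕ) (a : ℕ → ℝ) (u v : Fin r → ℕ) :
    Wp r a (u + v) = Wp r a u * Wp r a v := by
  rw [Wp, Wp, Wp, ← Finset.prod_mul_distrib]
  exact Finset.prod_congr rfl fun k _ => by simp only [Pi.add_apply]; rw [pow_add]

lemma Tf_pos (r : ℕ) (y : Fin r → ℕ) : 0 < Tf r y :=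
  Finset.prod_pos fun k _ => by exact_mod_cast (y k).factorial_pos

lemma Tf_choose (r : ℕ) (y u v : Fin r → ℕ) (huv : u + v = y) :
    (∏ k : Fin r, (Nat.choose (y k) (u k) : ℝ)) * (Tf r u * Tf r v) = Tf r y := by
  rw [Tf, Tf, Tf, ← Finset.prod_mul_distrib, ← Finset.prod_mul_distrib]
  refine Finset.prod_congr rfl fun k _ => ?_
  have h := congrFun huv k
  simp only [Pi.add_apply] at h
  have h1 := Nat.choose_mul_factorial_mul_factorial (Nat.le.intro h)
  have h2 : y k - u k = v k := by omega
  rw [h2] at h1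
  have h3 := congrArg (Nat.cast (R := ℝ)) h1
  push_cast at h3
  rw [← h3]; ring

lemma A_conv (r : ℕ) (a : ℕ → ℝ) (m n : ℕ) (hm : 1 ≤ m) (hn : 1 ≤ n) (t : ℕ) :
    A r a (m + n) t = ∑ s ∈ Finset.range (t + 1), A r a m s * A r a n (t - s) := by
  have h1 : ∀ s ∈ range (t + 1), A r a m s * A r a n (t - s)
      = ∑ pr ∈ antidiagonalTuple r m ×ˢ antidiagonalTuple r n,
          ((((Nat.factorial m : ℝ)) / Tf r pr.1) * Wp r a pr.1
              * (Nat.choose (s + Sw r pr.1 - 1) s : ℝ))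
          * ((((Nat.factorial n : ℝ)) / Tf r pr.2) * Wp r a pr.2
              * (Nat.choose (t - s + Sw r pr.2 - 1) (t - s) : ℝ)) := by
    intro s _
    rw [A_eq, A_eq, Finset.sum_mul_sum, ← Finset.sum_product']
  rw [Finset.sum_congr rfl h1, Finset.sum_comm]
  have h2 : ∀ pr ∈ antidiagonalTuple r m ×ˢ antidiagonalTuple r n,
      (∑ s ∈ range (t + 1),
        ((((Nat.factorial m : ℝ)) / Tf r pr.1) * Wp r a pr.1
            * (Nat.choose (s + Sw r pr.1 - 1) s : ℝ))
        * ((((Nat.factorial n : ℝ)) / Tf r pr.2) * Wp r a pr.2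
            * (Nat.choose (t - s + Sw r pr.2 - 1) (t - s) : ℝ)))
      = (((Nat.factorial m : ℝ) / Tf r pr.1) * Wp r a pr.1
          * (((Nat.factorial n : ℝ)) / Tf r pr.2) * Wp r a pr.2)
          * (Nat.choose (t + Sw r pr.1 + Sw r pr.2 - 1) t : ℝ) := by
    intro pr hpr
    rw [Finset.mem_product] at hpr
    have hu : 1 ≤ Sw r pr.1 := le_trans hm (Sw_ge r m pr.1 hpr.1)
    have hv : 1 ≤ Sw r pr.2 := le_trans hn (Sw_ge r n pr.2 hpr.2)
    have e : ∀ s ∈ range (t + 1),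
        ((((Nat.factorial m : ℝ)) / Tf r pr.1) * Wp r a pr.1
            * (Nat.choose (s + Sw r pr.1 - 1) s : ℝ))
        * ((((Nat.factorial n : ℝ)) / Tf r pr.2) * Wp r a pr.2
            * (Nat.choose (t - s + Sw r pr.2 - 1) (t - s) : ℝ))
        = (((Nat.factorial m : ℝ) / Tf r pr.1) * Wp r a pr.1
            * (((Nat.factorial n : ℝ)) / Tf r pr.2) * Wp r a pr.2)
          * ((Nat.choose (s + Sw r pr.1 - 1) s : ℝ)
              * (Nat.choose (t - s + Sw r pr.2 - 1) (t - s) : ℝ)) := fun s _ => by ring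
    rw [Finset.sum_congr rfl e, ← Finset.mul_sum, choose_conv' _ _ t hu hv]
  rw [Finset.sum_congr rfl h2]
  have hmaps : ∀ pr ∈ antidiagonalTuple r m ×ˢ antidiagonalTuple r n,
      pr.1 + pr.2 ∈ antidiagonalTuple r (m + n) := by
    intro pr hpr
    rw [Finset.mem_product] at hpr
    obtain ⟨hp1, hp2⟩ := hpr
    rw [mem_antidiagonalTuple] at *
    simp only [Pi.add_apply]
    rw [Finset.sum_add_distrib, hp1, hp2]
  rw [← Finset.sum_fiberwise_of_maps_to hmaps _]
  rw [A_eq]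
  refine Finset.sum_congr rfl fun y hy => ?_
  have hy' := (mem_antidiagonalTuple).1 hy
  have hTy := (Tf_pos r y).ne'
  have hterm : ∀ pr ∈ (antidiagonalTuple r m ×ˢ antidiagonalTuple r n).filter
      (fun pr => pr.1 + pr.2 = y),
      (((Nat.factorial m : ℝ) / Tf r pr.1) * Wp r a pr.1
          * (((Nat.factorial n : ℝ)) / Tf r pr.2) * Wp r a pr.2)
          * (Nat.choose (t + Sw r pr.1 + Sw r pr.2 - 1) t : ℝ)
        = ((Nat.factorial m : ℝ) * (Nat.factorial n : ℝ) / Tf r y) * Wp r a y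
            * (Nat.choose (t + Sw r y - 1) t : ℝ)
            * (∏ k : Fin r, (Nat.choose (y k) (pr.1 k) : ℝ)) := by
    intro pr hprm
    simp only [Finset.mem_filter, Finset.mem_product] at hprm
    obtain ⟨⟨hp1, hp2⟩, hp3⟩ := hprm
    have hS : Sw r pr.1 + Sw r pr.2 = Sw r y := by rw [← Sw_add, hp3]
    have hW : Wp r a pr.1 * Wp r a pr.2 = Wp r a y := by rw [← Wp_add, hp3]
    have hTfc := Tf_choose r y pr.1 pr.2 hp3
    have hT1 := (Tf_pos r pr.1).ne'
    have hT2 := (Tf_pos r pr.2).ne'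
    have harg : t + Sw r pr.1 + Sw r pr.2 = t + Sw r y := by omega
    rw [harg]
    have hCne : (∏ k : Fin r, ((Nat.choose (y k) (pr.1 k)) : ℝ)) ≠ 0 := by
      refine (Finset.prod_pos fun k _ => ?_).ne'
      have hk := congrFun hp3 k
      simp only [Pi.add_apply] at hk
      exact_mod_cast Nat.cast_pos.mpr (Nat.choose_pos (Nat.le.intro hk))
    have key : (Nat.factorial m : ℝ) / Tf r pr.1 * ((Nat.factorial n : ℝ) / Tf r pr.2)
        = (Nat.factorial m : ℝ) * (Nat.factorial n : ℝ)
            * (∏ k : Fin r, (Nat.choose (y k) (pr.1 k) : ℝ)) / Tf r y := by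
      rw [← hTfc]
      field_simp
    calc (((Nat.factorial m : ℝ) / Tf r pr.1) * Wp r a pr.1
          * (((Nat.factorial n : ℝ)) / Tf r pr.2) * Wp r a pr.2)
          * (Nat.choose (t + Sw r y - 1) t : ℝ)
        = ((Nat.factorial m : ℝ) / Tf r pr.1 * ((Nat.factorial n : ℝ) / Tf r pr.2))
            * (Wp r a pr.1 * Wp r a pr.2) * (Nat.choose (t + Sw r y - 1) t : ℝ) := by ring
      _ = ((Nat.factorial m : ℝ) * (Nat.factorial n : ℝ)
            * (∏ k : Fin r, (Nat.choose (y k) (pr.1 k) : ℝ)) / Tf r y) * Wp r a y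
            * (Nat.choose (t + Sw r y - 1) t : ℝ) := by rw [key, hW]
      _ = _ := by ring
  rw [Finset.sum_congr rfl hterm, ← Finset.mul_sum]
  have hfc : ∑ pr ∈ (antidiagonalTuple r m ×ˢ antidiagonalTuple r n).filter
      (fun pr => pr.1 + pr.2 = y), ∏ k : Fin r, ((Nat.choose (y k) (pr.1 k)) : ℝ)
      = ((m + n).choose m : ℝ) := by
    exact_mod_cast congrArg (Nat.cast (R := ℝ)) (fiber_choose r m n y hy')
  rw [hfc]
  have h4 := Nat.choose_mul_factorial_mul_factorial (Nat.le_add_right m n)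
  rw [Nat.add_sub_cancel_left] at h4
  have hfact : ((m + n).choose m : ℝ) * (Nat.factorial m : ℝ) * (Nat.factorial n : ℝ)
      = (Nat.factorial (m + n) : ℝ) := by exact_mod_cast congrArg (Nat.cast (R := ℝ)) h4
  rw [← hfact]
  ring

end AuxAC

/-- For all integers `m, n ≥ 1` and every `t ∈ ℕ`,
`A_{m+n}(t) = ∑_{s=0}^t A_m(s) A_n(t−s)`; in particular, since `A₁ = p`, for `n ≥ 2` one has
`A_n(t) = ∑_{x=0}^t p(x) A_{n−1}(t−x)`. -/
theorem A_convolution (r : ℕ) (hr : 1 ≤ r) (a : ℕ → ℝ) (ha : ∀ k, 0 ≤ a k)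
    (m n : ℕ) (hm : 1 ≤ m) (hn : 1 ≤ n) (t : ℕ) :
    (A r a (m + n) t = ∑ s ∈ Finset.range (t + 1), A r a m s * A r a n (t - s)) ∧
    ((∀ x : ℕ, A r a 1 x = p r a x) ∧
      (2 ≤ n → A r a n t = ∑ x ∈ Finset.range (t + 1), p r a x * A r a (n - 1) (t - x))) := by
  refine ⟨A_conv r a m n hm hn t, fun x => A_one r a x, fun hn2 => ?_⟩
  have h1 : n = 1 + (n - 1) := by omega
  calc A r a n t = A r a (1 + (n - 1)) t := by rw [← h1]
    _ = ∑ x ∈ Finset.range (t + 1), A r a 1 x * A r a (n - 1) (t - x) :=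
        A_conv r a 1 (n - 1) le_rfl (by omega) t
    _ = _ := Finset.sum_congr rfl fun x _ => by rw [A_one]
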